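/- Under the hypotheses of the Lipschitz-case convergence theorem (H Hilbert, Ω ⊆ H open, F : Ω → H continuously Fréchet differentiable, T maximal monotone, x* ∈ Ω with 0 ∈ F(x*) + T(x*), F'(x*) positive-semidefinite, F̂'(x*) := (F'(x*)+F'(x*)*)/2 boundedly invertible, K > 0 with ‖F̂'(x*)⁻¹‖·‖F'(x) − F'(y)‖ ≤ K‖x − y‖ for all x, y ∈ Ω, κ := sup{t > 0 : B(x*,t) ⊂ Ω}, r := min{κ, 2/(3K)}), let x₀ ∈ B(x*, r) \ {x*} and let {x_k} be a Newton sequence: 0 ∈ F(x_k) + F'(x_k)(x_{k+1} − x_k) + T(x_{k+1}) for all k. Then ‖x* − x_k‖ ≤ (2/(3K)) · ((3K/2)‖x* − x₀‖)^{2^k} for all k = 0, 1, …. -/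

import Mathlib

open RealInnerProductSpace Filter Metric Set


/-- A set-valued operator `T : H ⇉ H` is monotone if `⟨u - v, y - x⟩ ≥ 0` whenever
`u ∈ T y` and `v ∈ T x`; it is maximal monotone if moreover every pair `(x, u)` that is
monotonically related to the graph of `T` belongs to the graph of `T`. -/
def IsMaximalMonotone {H : Type*} [NormedAddCommGroup H] [InnerProductSpace ℝ H]
    (T : H → Set H) : Prop :=
  (∀ x y u v : H, u ∈ T y → v ∈ T x → 0 ≤ ⟪u - v, y - x⟫) ∧
  (∀ x u : H, (∀ y v : H, v ∈ T y → 0 ≤ ⟪u - v, x - y⟫) → u ∈ T x)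

lemma taylor_aux {H : Type*} [NormedAddCommGroup H] [NormedSpace ℝ H]
    {s : Set H} (hs : Convex ℝ s) {F : H → H} {F' : H → H →L[ℝ] H}
    (hFd : ∀ z ∈ s, HasFDerivAt F (F' z) z) {L : ℝ}
    (hlip : ∀ u ∈ s, ∀ v ∈ s, ‖F' u - F' v‖ ≤ L * ‖u - v‖)
    {x y : H} (hx : x ∈ s) (hy : y ∈ s) :
    ‖F y - F x - F' x (y - x)‖ ≤ L / 2 * ‖y - x‖ ^ 2 := by
  set γ : ℝ → H := fun t => x + t • (y - x) with hγ
  have hγmem : ∀ t ∈ Icc (0:ℝ) 1, γ t ∈ s := by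
    intro t ht
    have := hs.add_smul_sub_mem hx hy ht
    simpa [hγ] using this
  set f : ℝ → H := fun t => F (γ t) - t • (F' x (y - x)) - F x with hf
  set f' : ℝ → H := fun t => F' (γ t) (y - x) - F' x (y - x) with hf'
  have hd : ∀ t ∈ Icc (0:ℝ) 1, HasDerivAt f (f' t) t := by
    intro t ht
    have hγd : HasDerivAt γ (y - x) t := by
      simpa [hγ] using ((hasDerivAt_id t).smul_const (y - x)).const_add x
    have h1 : HasDerivAt (fun t => F (γ t)) (F' (γ t) (y - x)) t := by
      simpa [Function.comp_def] using (hFd (γ t) (hγmem t ht)).comp_hasDerivAt t hγd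
    have h2 : HasDerivAt (fun t : ℝ => t • (F' x (y - x))) (F' x (y - x)) t := by
      simpa using (hasDerivAt_id t).smul_const (F' x (y - x))
    simpa [hf, hf'] using (h1.sub h2).sub_const (F x)
  have key : ∀ t ∈ Icc (0:ℝ) 1, ‖f t‖ ≤ L * ‖y - x‖ ^ 2 / 2 * t ^ 2 := by
    have hB : ∀ t : ℝ, HasDerivAt (fun t => L * ‖y - x‖ ^ 2 / 2 * t ^ 2)
        (L * ‖y - x‖ ^ 2 * t) t := by
      intro t
      have := ((hasDerivAt_pow 2 t).const_mul (L * ‖y - x‖ ^ 2 / 2))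
      refine this.congr_deriv ?_
      ring
    refine image_norm_le_of_norm_deriv_right_le_deriv_boundary
      (fun t ht => (hd t ht).continuousAt.continuousWithinAt)
      (fun t ht => (hd t (Ico_subset_Icc_self ht)).hasDerivWithinAt)
      ?_ hB ?_
    · simp [hf, hγ]
    · intro t ht
      have htmem := hγmem t (Ico_subset_Icc_self ht)
      have h1 : ‖f' t‖ ≤ ‖F' (γ t) - F' x‖ * ‖y - x‖ := by
        have := (F' (γ t) - F' x).le_opNorm (y - x)
        simpa [hf'] using this
      have h2 : ‖F' (γ t) - F' x‖ ≤ L * (t * ‖y - x‖) := by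
        have := hlip (γ t) htmem x hx
        have hn : ‖γ t - x‖ = t * ‖y - x‖ := by
          simp [hγ, norm_smul, abs_of_nonneg ht.1]
        rwa [hn] at this
      calc ‖f' t‖ ≤ ‖F' (γ t) - F' x‖ * ‖y - x‖ := h1
        _ ≤ L * (t * ‖y - x‖) * ‖y - x‖ := by
            apply mul_le_mul_of_nonneg_right h2 (norm_nonneg _)
        _ = L * ‖y - x‖ ^ 2 * t := by ring
  have := key 1 (by norm_num)
  have h1 : f 1 = F y - F' x (y - x) - F x := by simp [hf, hγ]
  rw [h1] at this
  calc ‖F y - F x - F' x (y - x)‖ = ‖F y - F' x (y - x) - F x‖ := by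
        rw [show F y - F x - F' x (y - x) = F y - F' x (y - x) - F x by abel]
    _ ≤ L * ‖y - x‖ ^ 2 / 2 * 1 ^ 2 := this
    _ = L / 2 * ‖y - x‖ ^ 2 := by ring

lemma cs_aux {H : Type*} [NormedAddCommGroup H] [InnerProductSpace ℝ H]
    (A : H →L[ℝ] H) (hsym : ∀ w v : H, ⟪A w, v⟫ = ⟪A v, w⟫)
    (hpsd : ∀ w : H, 0 ≤ ⟪A w, w⟫) (w v : H) :
    ⟪A w, v⟫ ^ 2 ≤ ⟪A w, w⟫ * ⟪A v, v⟫ := by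
  have hquad : ∀ t : ℝ, 0 ≤ ⟪A v, v⟫ * t ^ 2 + (2 * ⟪A w, v⟫) * t + ⟪A w, w⟫ := by
    intro t
    have h := hpsd (w + t • v)
    have : ⟪A (w + t • v), w + t • v⟫
        = ⟪A v, v⟫ * t ^ 2 + (2 * ⟪A w, v⟫) * t + ⟪A w, w⟫ := by
      simp only [map_add, map_smul, inner_add_add_self, inner_add_left, inner_add_right,
        inner_smul_left, inner_smul_right, real_inner_smul_left, real_inner_smul_right]
      rw [hsym v w]
      simp only [starRingEnd_apply, star_trivial]
      ring
    linarith [this ▸ h]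
  have hquad' : ∀ t : ℝ, 0 ≤ ⟪A v, v⟫ * (t * t) + (2 * ⟪A w, v⟫) * t + ⟪A w, w⟫ := by
    intro t; have := hquad t; nlinarith [this]
  have hd := discrim_le_zero hquad'
  rw [discrim] at hd
  nlinarith [hd]

lemma coercive_aux {H : Type*} [NormedAddCommGroup H] [InnerProductSpace ℝ H]
    (A G : H →L[ℝ] H) (hsym : ∀ w v : H, ⟪A w, v⟫ = ⟪A v, w⟫)
    (hpsd : ∀ w : H, 0 ≤ ⟪A w, w⟫)
    (hG : ∀ w : H, A (G w) = w) (w : H) :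
    ‖w‖ ^ 2 ≤ ‖G‖ * ⟪A w, w⟫ := by
  by_cases hw : w = 0
  · simp [hw]
  have h1 : (‖w‖ ^ 2) ^ 2 = ⟪A (G w), w⟫ ^ 2 := by
    rw [hG w, real_inner_self_eq_norm_sq]
  have h2 : ⟪A (G w), w⟫ ^ 2 ≤ ⟪A (G w), G w⟫ * ⟪A w, w⟫ := cs_aux A hsym hpsd _ _
  have h3 : ⟪A (G w), G w⟫ ≤ ‖G‖ * ‖w‖ ^ 2 := by
    rw [hG w]
    calc ⟪w, G w⟫ ≤ ‖w‖ * ‖G w‖ := real_inner_le_norm _ _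
      _ ≤ ‖w‖ * (‖G‖ * ‖w‖) := by
          exact mul_le_mul_of_nonneg_left (G.le_opNorm w) (norm_nonneg _)
      _ = ‖G‖ * ‖w‖ ^ 2 := by ring
  have hApos := hpsd w
  have hwpos : 0 < ‖w‖ ^ 2 := by
    have : 0 < ‖w‖ := norm_pos_iff.mpr hw
    positivity
  nlinarith [h1, h2, h3, hApos, hwpos]

set_option maxHeartbeats 1000000 in
theorem newton_lipschitz_explicit_rate {H : Type*} [NormedAddCommGroup H] [InnerProductSpace ℝ H] [CompleteSpace H]
    (Ω : Set H) (hΩ : IsOpen Ω) (F : H → H) (F' : H → H →L[ℝ] H)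
    (hFd : ∀ x ∈ Ω, HasFDerivAt F (F' x) x) (hF'c : ContinuousOn F' Ω)
    (xs : H) (hxs : xs ∈ Ω)
    (T : H → Set H) (hT : IsMaximalMonotone T)
    (hsol : (0 : H) ∈ (fun w => F xs + w) '' T xs)
    (hpsd : ∀ y : H, 0 ≤ ⟪(F' xs) y, y⟫)
    (Ahat : H →L[ℝ] H)
    (hAhat : Ahat = (1 / 2 : ℝ) • (F' xs + ContinuousLinearMap.adjoint (F' xs)))
    (Ginv : H →L[ℝ] H)
    (hGinv1 : Ginv.comp Ahat = ContinuousLinearMap.id ℝ H)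
    (hGinv2 : Ahat.comp Ginv = ContinuousLinearMap.id ℝ H)
    (K : ℝ) (hK : 0 < K)
    (hlip : ∀ x ∈ Ω, ∀ y ∈ Ω, ‖Ginv‖ * ‖F' x - F' y‖ ≤ K * ‖x - y‖)
    (κ : ℝ) (hκ : κ = sSup {u : ℝ | 0 < u ∧ Metric.ball xs u ⊆ Ω})
    (r : ℝ) (hr : r = min κ (2 / (3 * K)))
    (xseq : ℕ → H) (hx0 : xseq 0 ∈ Metric.ball xs r) (hx0ne : xseq 0 ≠ xs)
    (hNewton : ∀ k : ℕ, (0 : H) ∈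
      (fun w => F (xseq k) + (F' (xseq k)) (xseq (k + 1) - xseq k) + w) '' T (xseq (k + 1)))
    :
    ∀ k : ℕ, ‖xs - xseq k‖ ≤ 2 / (3 * K) * (3 * K / 2 * ‖xs - xseq 0‖) ^ (2 ^ k) := by
  -- basic facts about Ginv and Ahat
  have hAG : ∀ z : H, Ahat (Ginv z) = z := by
    intro z
    have := DFunLike.congr_fun hGinv2 z
    simpa using this
  have hGA : ∀ z : H, Ginv (Ahat z) = z := by
    intro z
    have := DFunLike.congr_fun hGinv1 z
    simpa using this
  have hne0 : xseq 0 - xs ≠ 0 := sub_ne_zero.mpr hx0ne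
  have hGne : Ginv ≠ 0 := by
    intro h
    have := hGA (xseq 0 - xs)
    rw [h] at this
    simp at this
    exact hne0 this.symm
  have hGpos : (0:ℝ) < ‖Ginv‖ := norm_pos_iff.mpr hGne
  have hsym : ∀ w v : H, ⟪Ahat w, v⟫ = ⟪Ahat v, w⟫ := by
    intro w v
    simp only [hAhat, ContinuousLinearMap.smul_apply, ContinuousLinearMap.add_apply,
      inner_smul_left, inner_add_left, ContinuousLinearMap.adjoint_inner_left,
      starRingEnd_apply, star_trivial]
    rw [real_inner_comm (F' xs w) v, real_inner_comm w (F' xs v)]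
    ring
  have hAeq : ∀ w : H, ⟪Ahat w, w⟫ = ⟪F' xs w, w⟫ := by
    intro w
    simp only [hAhat, ContinuousLinearMap.smul_apply, ContinuousLinearMap.add_apply,
      inner_smul_left, inner_add_left, ContinuousLinearMap.adjoint_inner_left,
      starRingEnd_apply, star_trivial]
    rw [real_inner_comm w (F' xs w)]
    ring
  have hApsd : ∀ w : H, 0 ≤ ⟪Ahat w, w⟫ := by
    intro w; rw [hAeq w]; exact hpsd w
  have coerc : ∀ w : H, ‖w‖ ^ 2 ≤ ‖Ginv‖ * ⟪F' xs w, w⟫ := by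
    intro w
    have := coercive_aux Ahat Ginv hsym hApsd hAG w
    rwa [hAeq w] at this
  -- Lipschitz constant L for F'
  set L : ℝ := K / ‖Ginv‖ with hLdef
  have hLpos : 0 < L := by positivity
  have hlip' : ∀ x ∈ Ω, ∀ y ∈ Ω, ‖F' x - F' y‖ ≤ L * ‖x - y‖ := by
    intro x hx y hy
    have h := hlip x hx y hy
    rw [hLdef, div_mul_eq_mul_div, le_div_iff₀ hGpos]
    nlinarith [h]
  have hGL : ‖Ginv‖ * L = K := by
    rw [hLdef]; field_simp
  -- distance facts
  have he0pos : 0 < ‖xs - xseq 0‖ := by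
    rw [norm_pos_iff, sub_ne_zero]
    exact fun h => hx0ne h.symm
  have he0r : ‖xs - xseq 0‖ < r := by
    have := mem_ball.mp hx0
    rwa [dist_eq_norm, norm_sub_rev] at this
  have hrK : r ≤ 2 / (3 * K) := hr ▸ min_le_right _ _
  have hrκ : r ≤ κ := hr ▸ min_le_left _ _
  set q : ℝ := 3 * K / 2 * ‖xs - xseq 0‖ with hqdef
  have hq0 : 0 < q := by positivity
  have hq1 : q < 1 := by
    have : ‖xs - xseq 0‖ < 2 / (3 * K) := lt_of_lt_of_le he0r hrK
    rw [hqdef]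
    rw [lt_div_iff₀ (by positivity : (0:ℝ) < 3 * K)] at this
    nlinarith [this]
  -- membership in Ω from the ball of radius r
  have hball : ∀ z : H, ‖xs - z‖ < r → ∃ ρ : ℝ, ‖xs - z‖ < ρ ∧ Metric.ball xs ρ ⊆ Ω := by
    intro z hz
    have hSne : Set.Nonempty {u : ℝ | 0 < u ∧ Metric.ball xs u ⊆ Ω} := by
      obtain ⟨ε, hε, hb⟩ := Metric.isOpen_iff.mp hΩ xs hxs
      exact ⟨ε, hε, hb⟩
    have hlt : ‖xs - z‖ < sSup {u : ℝ | 0 < u ∧ Metric.ball xs u ⊆ Ω} := by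
      rw [← hκ]; exact lt_of_lt_of_le hz hrκ
    obtain ⟨u, ⟨hu0, hub⟩, hltu⟩ := exists_lt_of_lt_csSup hSne hlt
    exact ⟨u, hltu, hub⟩
  have hmemΩ : ∀ z : H, ‖xs - z‖ < r → z ∈ Ω := by
    intro z hz
    obtain ⟨ρ, hρ, hρΩ⟩ := hball z hz
    apply hρΩ
    rw [mem_ball, dist_eq_norm, norm_sub_rev]
    exact hρ
  -- the one-step contraction estimate
  have step : ∀ k : ℕ, ‖xs - xseq k‖ < r →
      ‖xs - xseq (k + 1)‖ ≤ 3 * K / 2 * ‖xs - xseq k‖ ^ 2 := by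
    intro k hk
    obtain ⟨ρ, hρ, hρΩ⟩ := hball (xseq k) hk
    have hxkB : xseq k ∈ Metric.ball xs ρ := by
      rw [mem_ball, dist_eq_norm, norm_sub_rev]; exact hρ
    have hxsB : xs ∈ Metric.ball xs ρ := by
      exact mem_ball_self (lt_of_le_of_lt (norm_nonneg _) hρ)
    set x := xseq k with hxdef
    set x' := xseq (k + 1) with hx'def
    set w : H := xs - x' with hwdef
    -- extract the inclusions
    obtain ⟨v, hvT, hveq⟩ := hNewton k
    obtain ⟨v0, hv0T, hv0eq⟩ := hsol
    simp only at hveq hv0eq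
    have hv : v = -(F x + F' x (x' - x)) := by
      have : F x + F' x (x' - x) + v = 0 := hveq
      exact eq_neg_of_add_eq_zero_right this
    have hv0 : v0 = -F xs := eq_neg_of_add_eq_zero_right hv0eq
    have hmono := hT.1 xs x' v v0 hvT hv0T
    -- the remainder
    set R : H := F xs - F x - F' x (xs - x) with hRdef
    have hvdiff : v - v0 = R + F' x w := by
      rw [hv, hv0, hRdef, hwdef]
      simp only [map_sub]
      abel
    have hx'xs : x' - xs = -w := by rw [hwdef]; abel
    have hkey : ⟪F' x w, w⟫ ≤ ‖R‖ * ‖w‖ := by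
      rw [hvdiff, hx'xs, inner_neg_right, inner_add_left] at hmono
      have h1 : ⟪F' x w, w⟫ ≤ -⟪R, w⟫ := by linarith
      have h2 : -⟪R, w⟫ ≤ ‖R‖ * ‖w‖ := by
        have := real_inner_le_norm (-R) w
        rwa [inner_neg_left, norm_neg] at this
      linarith
    -- Taylor estimate
    have hR : ‖R‖ ≤ L / 2 * ‖xs - x‖ ^ 2 := by
      exact taylor_aux (convex_ball xs ρ) (fun z hz => hFd z (hρΩ hz))
        (fun u hu v hv => hlip' u (hρΩ hu) v (hρΩ hv)) hxkB hxsB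
    -- lower bound of the quadratic form
    have hlow : (1 - K * ‖xs - x‖) * ‖w‖ ^ 2 ≤ ‖Ginv‖ * ⟪F' x w, w⟫ := by
      have h1 : ‖w‖ ^ 2 ≤ ‖Ginv‖ * ⟪F' xs w, w⟫ := coerc w
      have h2 : |⟪F' x w - F' xs w, w⟫| ≤ L * ‖xs - x‖ * ‖w‖ ^ 2 := by
        have ha : ⟪F' x w - F' xs w, w⟫ = ⟪(F' x - F' xs) w, w⟫ := by
          simp [ContinuousLinearMap.sub_apply]
        rw [ha]
        calc |⟪(F' x - F' xs) w, w⟫| ≤ ‖(F' x - F' xs) w‖ * ‖w‖ :=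
              abs_real_inner_le_norm _ _
          _ ≤ ‖F' x - F' xs‖ * ‖w‖ * ‖w‖ := by
              exact mul_le_mul_of_nonneg_right ((F' x - F' xs).le_opNorm w) (norm_nonneg _)
          _ ≤ L * ‖x - xs‖ * ‖w‖ * ‖w‖ := by
              have hl := hlip' x (hmemΩ x hk) xs hxs
              exact mul_le_mul_of_nonneg_right
                (mul_le_mul_of_nonneg_right hl (norm_nonneg w)) (norm_nonneg w)
          _ = L * ‖xs - x‖ * ‖w‖ ^ 2 := by rw [norm_sub_rev]; ring
      have h3 : ⟪F' x w, w⟫ = ⟪F' xs w, w⟫ + ⟪F' x w - F' xs w, w⟫ := by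
        rw [inner_sub_left]; ring
      have h4 : -(L * ‖xs - x‖ * ‖w‖ ^ 2) ≤ ⟪F' x w - F' xs w, w⟫ := neg_le_of_abs_le h2
      have h6 : -(K * ‖xs - x‖ * ‖w‖ ^ 2) ≤ ‖Ginv‖ * ⟪F' x w - F' xs w, w⟫ := by
        have := mul_le_mul_of_nonneg_left h4 (le_of_lt hGpos)
        have he : ‖Ginv‖ * -(L * ‖xs - x‖ * ‖w‖ ^ 2) = -(K * ‖xs - x‖ * ‖w‖ ^ 2) := by
          rw [← hGL]; ring
        linarith [he ▸ this]
      have h7 : ‖Ginv‖ * ⟪F' x w, w⟫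
          = ‖Ginv‖ * ⟪F' xs w, w⟫ + ‖Ginv‖ * ⟪F' x w - F' xs w, w⟫ := by
        rw [h3]; ring
      nlinarith [h1, h6, h7]
    -- combine
    have heK : K * ‖xs - x‖ < 2 / 3 := by
      have h := lt_of_lt_of_le hk hrK
      rw [lt_div_iff₀ (by positivity : (0:ℝ) < 3 * K)] at h
      nlinarith [h]
    by_cases hw0 : ‖w‖ = 0
    · show ‖w‖ ≤ _
      rw [hw0]
      positivity
    · have hwpos : 0 < ‖w‖ := lt_of_le_of_ne (norm_nonneg _) (Ne.symm hw0)
      have hchain : (1 - K * ‖xs - x‖) * ‖w‖ ^ 2 ≤ K / 2 * ‖xs - x‖ ^ 2 * ‖w‖ := by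
        calc (1 - K * ‖xs - x‖) * ‖w‖ ^ 2 ≤ ‖Ginv‖ * ⟪F' x w, w⟫ := hlow
          _ ≤ ‖Ginv‖ * (‖R‖ * ‖w‖) := by
              exact mul_le_mul_of_nonneg_left hkey (le_of_lt hGpos)
          _ ≤ ‖Ginv‖ * (L / 2 * ‖xs - x‖ ^ 2 * ‖w‖) := by
              apply mul_le_mul_of_nonneg_left _ (le_of_lt hGpos)
              exact mul_le_mul_of_nonneg_right hR (norm_nonneg _)
          _ = K / 2 * ‖xs - x‖ ^ 2 * ‖w‖ := by
              rw [← hGL]; ring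
      show ‖w‖ ≤ 3 * K / 2 * ‖xs - x‖ ^ 2
      nlinarith [hchain, heK, hwpos, mul_pos hwpos hwpos, sq_nonneg ‖w‖]
  -- the induction
  have hid : 2 / (3 * K) * q = ‖xs - xseq 0‖ := by
    rw [hqdef]; field_simp
  intro k
  induction k with
  | zero =>
      simp only [pow_zero, pow_one]
      rw [hid]
  | succ k ih =>
      have hqpow : q ^ (2 ^ k) ≤ q := by
        calc q ^ (2 ^ k) ≤ q ^ 1 :=
              pow_le_pow_of_le_one (le_of_lt hq0) (le_of_lt hq1) Nat.one_le_two_pow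
          _ = q := pow_one q
      have hek_lt : ‖xs - xseq k‖ < r := by
        calc ‖xs - xseq k‖ ≤ 2 / (3 * K) * q ^ (2 ^ k) := ih
          _ ≤ 2 / (3 * K) * q := by
              exact mul_le_mul_of_nonneg_left hqpow (by positivity)
          _ = ‖xs - xseq 0‖ := hid
          _ < r := he0r
      have hs := step k hek_lt
      have hnn : (0:ℝ) ≤ 2 / (3 * K) * q ^ (2 ^ k) := by positivity
      calc ‖xs - xseq (k + 1)‖ ≤ 3 * K / 2 * ‖xs - xseq k‖ ^ 2 := hs
        _ ≤ 3 * K / 2 * (2 / (3 * K) * q ^ (2 ^ k)) ^ 2 := by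
            apply mul_le_mul_of_nonneg_left _ (by positivity)
            exact pow_le_pow_left₀ (norm_nonneg _) ih 2
        _ = 2 / (3 * K) * (q ^ (2 ^ k)) ^ 2 := by
            field_simp
        _ = 2 / (3 * K) * q ^ (2 ^ (k + 1)) := by
            rw [← pow_mul, pow_succ]
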